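/- The deformed Bessel functions satisfy the recurrence 2 D_μ J_n^μ(x) = J_{n−1}^μ(x) − J_{n+1}^μ(x), where D_μ is the Dunkl operator. -/

import Mathlib

/-- The Dunkl operator `D_μ f(x) = f'(x) + μ (f(x) - f(-x))/x`. -/
noncomputable def dunkl (μ : ℝ) (f : ℝ → ℝ) (x : ℝ) : ℝ :=
  deriv f x + μ * (f x - f (-x)) / x

/-- The deformed integer `[n]_μ = n + μ (1 - (-1)^n)`. -/
noncomputable def dIdx (μ : ℝ) (n : ℕ) : ℝ := n + μ * (1 - (-1 : ℝ) ^ n)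

/-- The deformed factorial `[n]_μ!`. -/
noncomputable def dFact (μ : ℝ) : ℕ → ℝ
  | 0 => 1
  | n + 1 => dIdx μ (n + 1) * dFact μ n

/-- The deformed Bessel function `J_n^μ` for `n ≥ 0`. -/
noncomputable def Jmu (μ : ℝ) (n : ℕ) (x : ℝ) : ℝ :=
  ∑' k : ℕ, (-1 : ℝ) ^ k * (Nat.factorial (2 * k + n)) /
      ((Nat.factorial k) * (Nat.factorial (k + n)) * dFact μ (2 * k + n)) *
    (x / 2) ^ (2 * k + n)

/-- `J_n^μ` for `n ∈ ℤ`, with `J_{-n}^μ = (-1)^n J_n^μ`. -/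
noncomputable def JmuZ (μ : ℝ) (n : ℤ) (x : ℝ) : ℝ :=
  if 0 ≤ n then Jmu μ n.toNat x else (-1 : ℝ) ^ (-n).toNat * Jmu μ (-n).toNat x

noncomputable def coef (μ : ℝ) (n k : ℕ) : ℝ :=
  (-1 : ℝ) ^ k * (Nat.factorial (2 * k + n)) /
      ((Nat.factorial k) * (Nat.factorial (k + n)) * dFact μ (2 * k + n))

lemma Jmu_eq (μ : ℝ) (n : ℕ) (x : ℝ) :
    Jmu μ n x = ∑' k : ℕ, coef μ n k * (x / 2) ^ (2 * k + n) := rfl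

lemma neg_one_pow_le (m : ℕ) : ((-1 : ℝ)) ^ m ≤ 1 := by
  rcases neg_one_pow_eq_or ℝ m with h | h <;> simp [h]

lemma dIdx_ge (μ : ℝ) (hμ : 0 ≤ μ) (m : ℕ) : (m : ℝ) ≤ dIdx μ m := by
  have h := neg_one_pow_le m
  unfold dIdx; nlinarith

lemma dIdx_pos (μ : ℝ) (hμ : 0 ≤ μ) (m : ℕ) (hm : 1 ≤ m) : 0 < dIdx μ m :=
  lt_of_lt_of_le (by exact_mod_cast hm) (dIdx_ge μ hμ m)

lemma dFact_succ (μ : ℝ) (m : ℕ) : dFact μ (m + 1) = dIdx μ (m + 1) * dFact μ m := rfl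

lemma dFact_pos (μ : ℝ) (hμ : 0 ≤ μ) (m : ℕ) : 0 < dFact μ m := by
  induction m with
  | zero => norm_num [dFact]
  | succ p ih => rw [dFact_succ]; exact mul_pos (dIdx_pos μ hμ _ (Nat.le_add_left 1 p)) ih

lemma dFact_ge (μ : ℝ) (hμ : 0 ≤ μ) (m : ℕ) : (Nat.factorial m : ℝ) ≤ dFact μ m := by
  induction m with
  | zero => simp [dFact]
  | succ p ih =>
    rw [dFact_succ, Nat.factorial_succ]
    push_cast
    have h1 := dIdx_ge μ hμ (p + 1)
    have h2 : (0:ℝ) < Nat.factorial p := by exact_mod_cast Nat.factorial_pos p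
    push_cast at h1
    nlinarith [dFact_pos μ hμ p]

lemma coef_abs_le (μ : ℝ) (hμ : 0 ≤ μ) (n k : ℕ) : |coef μ n k| ≤ 1 / Nat.factorial k := by
  have hk : (0:ℝ) < Nat.factorial k := by exact_mod_cast Nat.factorial_pos k
  have hkn : (0:ℝ) < Nat.factorial (k + n) := by exact_mod_cast Nat.factorial_pos (k + n)
  have hm : (0:ℝ) < Nat.factorial (2 * k + n) := by exact_mod_cast Nat.factorial_pos (2 * k + n)
  have hd := dFact_pos μ hμ (2 * k + n)
  have hge := dFact_ge μ hμ (2 * k + n)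
  have habs : |coef μ n k| = (Nat.factorial (2 * k + n) : ℝ) /
      ((Nat.factorial k) * (Nat.factorial (k + n)) * dFact μ (2 * k + n)) := by
    unfold coef
    rw [abs_div, abs_mul, abs_pow, abs_neg, abs_one, one_pow, one_mul,
      abs_of_pos (by positivity), abs_of_pos (by positivity)]
  rw [habs]
  calc (Nat.factorial (2 * k + n) : ℝ) /
      ((Nat.factorial k) * (Nat.factorial (k + n)) * dFact μ (2 * k + n))
      ≤ (Nat.factorial (2 * k + n) : ℝ) /
      ((Nat.factorial k) * (Nat.factorial (k + n)) * (Nat.factorial (2 * k + n))) := by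
        gcongr
    _ = 1 / ((Nat.factorial k) * (Nat.factorial (k + n))) := by
        rw [div_eq_div_iff (by positivity) (by positivity)]; ring
    _ ≤ 1 / Nat.factorial k := by
        rw [div_le_div_iff₀ (by positivity) (by positivity)]
        nlinarith [hkn, hk, (by exact_mod_cast Nat.one_le_iff_ne_zero.mpr (Nat.factorial_ne_zero (k+n)) : (1:ℝ) ≤ Nat.factorial (k+n))]

lemma summable_U (n : ℕ) (r : ℝ) (hr : 0 ≤ r) :
    Summable (fun k : ℕ => (2 * (k : ℝ) + n + 2) * r ^ (2 * k + n) / Nat.factorial k) := by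
  refine Summable.of_nonneg_of_le (fun k => by positivity) (fun k => ?_)
    ((Real.summable_pow_div_factorial (2 * r ^ 2)).mul_left (((n : ℝ) + 2) * r ^ n))
  have hk2 : (k : ℝ) + 1 ≤ 2 ^ k := by exact_mod_cast Nat.lt_two_pow_self (n := k)
  have h1 : (1 : ℝ) ≤ 2 ^ k := one_le_pow₀ one_le_two
  have hcoef : (2 * (k : ℝ) + n + 2) ≤ ((n : ℝ) + 2) * 2 ^ k := by nlinarith [n.cast_nonneg (α := ℝ)]
  have hpow : r ^ (2 * k + n) = r ^ n * (r ^ 2) ^ k := by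
    rw [pow_add, ← pow_mul, mul_comm 2 k, pow_mul]; ring
  rw [hpow]
  have hfk : (0:ℝ) < Nat.factorial k := by exact_mod_cast Nat.factorial_pos k
  rw [div_le_iff₀ hfk]
  have : ((n : ℝ) + 2) * r ^ n * ((2 * r ^ 2) ^ k / Nat.factorial k) * Nat.factorial k
      = ((n : ℝ) + 2) * 2 ^ k * (r ^ n * (r ^ 2) ^ k) := by
    field_simp
    ring
  rw [this]
  have hnn : (0:ℝ) ≤ r ^ n * (r ^ 2) ^ k := by positivity
  nlinarith [mul_le_mul_of_nonneg_right hcoef hnn]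

lemma term_bound (μ : ℝ) (hμ : 0 ≤ μ) (n k : ℕ) {y r : ℝ} (h2 : |y / 2| ≤ r) :
    ‖coef μ n k * (y / 2) ^ (2 * k + n)‖ ≤ (2 * (k : ℝ) + n + 2) * r ^ (2 * k + n) / Nat.factorial k := by
  have hr : 0 ≤ r := le_trans (abs_nonneg _) h2
  have hfk : (0:ℝ) < Nat.factorial k := by exact_mod_cast Nat.factorial_pos k
  calc ‖coef μ n k * (y / 2) ^ (2 * k + n)‖ = |coef μ n k| * |y / 2| ^ (2 * k + n) := by
        rw [Real.norm_eq_abs, abs_mul, abs_pow]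
    _ ≤ (1 / Nat.factorial k) * r ^ (2 * k + n) := by
        apply mul_le_mul (coef_abs_le μ hμ n k) (pow_le_pow_left₀ (abs_nonneg _) h2 _)
          (by positivity) (by positivity)
    _ ≤ (2 * (k : ℝ) + n + 2) * r ^ (2 * k + n) / Nat.factorial k := by
        rw [div_mul_eq_mul_div, one_mul, div_le_div_iff₀ hfk hfk]
        have h1 : (0:ℝ) ≤ (2 * (k:ℝ) + n + 1) * (r ^ (2 * k + n) * Nat.factorial k) := by positivity
        nlinarith [h1]

lemma summable_Jmu (μ : ℝ) (hμ : 0 ≤ μ) (n : ℕ) (x : ℝ) :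
    Summable (fun k : ℕ => coef μ n k * (x / 2) ^ (2 * k + n)) := by
  apply Summable.of_norm_bounded (summable_U n |x / 2| (abs_nonneg _))
  intro k
  exact term_bound μ hμ n k le_rfl

lemma deriv_term_bound (μ : ℝ) (hμ : 0 ≤ μ) (n k : ℕ) {y r : ℝ} (h2 : |y / 2| ≤ r) (hr : 1 ≤ r) :
    ‖coef μ n k * ((2 * k + n : ℕ) * (y / 2) ^ (2 * k + n - 1) / 2)‖
      ≤ (2 * (k : ℝ) + n + 2) * r ^ (2 * k + n) / Nat.factorial k := by
  have hr0 : 0 ≤ r := le_trans zero_le_one hr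
  have hfk : (0:ℝ) < Nat.factorial k := by exact_mod_cast Nat.factorial_pos k
  have hpow : |y / 2| ^ (2 * k + n - 1) ≤ r ^ (2 * k + n) :=
    le_trans (pow_le_pow_left₀ (abs_nonneg _) h2 _)
      (pow_le_pow_right₀ hr (Nat.sub_le _ 1))
  calc ‖coef μ n k * ((2 * k + n : ℕ) * (y / 2) ^ (2 * k + n - 1) / 2)‖
      = |coef μ n k| * ((2 * k + n : ℕ) * |y / 2| ^ (2 * k + n - 1) / 2) := by
        simp only [Real.norm_eq_abs, abs_mul, abs_div, abs_pow, Nat.abs_cast, abs_two]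
    _ ≤ (1 / Nat.factorial k) * ((2 * k + n : ℕ) * r ^ (2 * k + n) / 2) := by
        apply mul_le_mul (coef_abs_le μ hμ n k) _ (by positivity) (by positivity)
        gcongr
    _ ≤ (2 * (k : ℝ) + n + 2) * r ^ (2 * k + n) / Nat.factorial k := by
        rw [div_mul_eq_mul_div, one_mul, div_le_div_iff₀ hfk hfk]
        push_cast
        have h1 : (0:ℝ) ≤ ((k:ℝ) + (n:ℝ)/2 + 2) * (r ^ (2 * k + n) * Nat.factorial k) := by positivity
        nlinarith [h1]

lemma summable_deriv_terms (μ : ℝ) (hμ : 0 ≤ μ) (n : ℕ) (x : ℝ) :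
    Summable (fun k : ℕ => coef μ n k * ((2 * k + n : ℕ) * (x / 2) ^ (2 * k + n - 1) / 2)) := by
  apply Summable.of_norm_bounded (summable_U n (|x| + 2) (by positivity))
  intro k
  apply deriv_term_bound μ hμ n k _ (by linarith [abs_nonneg x])
  rw [abs_div, abs_two]
  linarith [abs_nonneg x]

lemma hasDerivAt_Jmu (μ : ℝ) (hμ : 0 ≤ μ) (n : ℕ) (x : ℝ) :
    HasDerivAt (Jmu μ n)
      (∑' k : ℕ, coef μ n k * ((2 * k + n : ℕ) * (x / 2) ^ (2 * k + n - 1) / 2)) x := by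
  have hJ : Jmu μ n = fun z => ∑' k : ℕ, coef μ n k * (z / 2) ^ (2 * k + n) := by
    funext z; exact Jmu_eq μ n z
  rw [hJ]
  set r : ℝ := |x| + 2 with hr
  have hx : x ∈ Metric.ball (0 : ℝ) r := by
    simp only [Metric.mem_ball, dist_zero_right, Real.norm_eq_abs]
    linarith
  have hg : ∀ (k : ℕ) (y : ℝ), y ∈ Metric.ball (0:ℝ) r →
      HasDerivAt (fun z : ℝ => coef μ n k * (z / 2) ^ (2 * k + n))
        (coef μ n k * ((2 * k + n : ℕ) * (y / 2) ^ (2 * k + n - 1) / 2)) y := by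
    intro k y _
    have h : HasDerivAt (fun z : ℝ => (z / 2) ^ (2 * k + n))
        ((2 * k + n : ℕ) * (y / 2) ^ (2 * k + n - 1) * (1 / 2)) y :=
      ((hasDerivAt_id y).div_const 2).pow _
    have h2 := h.const_mul (coef μ n k)
    exact h2.congr_deriv (by ring)
  have hg' : ∀ (k : ℕ) (y : ℝ), y ∈ Metric.ball (0:ℝ) r →
      ‖coef μ n k * ((2 * k + n : ℕ) * (y / 2) ^ (2 * k + n - 1) / 2)‖
        ≤ (2 * (k : ℝ) + n + 2) * r ^ (2 * k + n) / Nat.factorial k := by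
    intro k y hy
    apply deriv_term_bound μ hμ n k _ (by simp only [hr]; linarith [abs_nonneg x])
    simp only [Metric.mem_ball, dist_zero_right, Real.norm_eq_abs] at hy
    rw [abs_div, abs_two]
    linarith [abs_nonneg y]
  exact hasDerivAt_tsum_of_isPreconnected (summable_U n r (by positivity))
    Metric.isOpen_ball (convex_ball (0:ℝ) r).isPreconnected
    hg hg' hx (summable_Jmu μ hμ n x) hx

lemma neg_one_pow_aux (k n : ℕ) : ((-1 : ℝ)) ^ (2 * k + n) = (-1) ^ n := by
  rw [pow_add, pow_mul, neg_one_sq, one_pow, one_mul]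

lemma Jmu_neg (μ : ℝ) (n : ℕ) (x : ℝ) : Jmu μ n (-x) = (-1) ^ n * Jmu μ n x := by
  rw [Jmu_eq, Jmu_eq, ← tsum_mul_left]
  congr 1
  funext k
  have h : (-x) / 2 = -(x / 2) := by ring
  rw [h, neg_pow, neg_one_pow_aux]
  ring

lemma key1 (μ : ℝ) (hμ : 0 ≤ μ) (n : ℕ) (x : ℝ) (hx : x ≠ 0) :
    2 * dunkl μ (Jmu μ n) x
      = ∑' k : ℕ, coef μ n k * (dIdx μ (2 * k + n) * (x / 2) ^ (2 * k + n - 1)) := by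
  have hD := (hasDerivAt_Jmu μ hμ n x).deriv
  unfold dunkl
  rw [hD, Jmu_neg, Jmu_eq]
  have hsum1 : Summable (fun k : ℕ => 2 * (coef μ n k * ((2 * k + n : ℕ) * (x / 2) ^ (2 * k + n - 1) / 2))) :=
    (summable_deriv_terms μ hμ n x).mul_left 2
  have hsum2 : Summable (fun k : ℕ =>
      (2 * μ * (1 - (-1) ^ n) / x) * (coef μ n k * (x / 2) ^ (2 * k + n))) :=
    (summable_Jmu μ hμ n x).mul_left _
  have expand : 2 * ((∑' k : ℕ, coef μ n k * ((2 * k + n : ℕ) * (x / 2) ^ (2 * k + n - 1) / 2))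
        + μ * ((∑' k : ℕ, coef μ n k * (x / 2) ^ (2 * k + n))
          - (-1) ^ n * ∑' k : ℕ, coef μ n k * (x / 2) ^ (2 * k + n)) / x)
      = (∑' k : ℕ, 2 * (coef μ n k * ((2 * k + n : ℕ) * (x / 2) ^ (2 * k + n - 1) / 2)))
        + ∑' k : ℕ, (2 * μ * (1 - (-1) ^ n) / x) * (coef μ n k * (x / 2) ^ (2 * k + n)) := by
    rw [tsum_mul_left, tsum_mul_left]
    field_simp
  rw [expand, ← Summable.tsum_add hsum1 hsum2]
  apply tsum_congr
  intro k
  rcases Nat.eq_zero_or_pos (2 * k + n) with h0 | hpos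
  · have hk : k = 0 := by omega
    have hn : n = 0 := by omega
    simp [hk, hn, dIdx]
  · obtain ⟨j, hj⟩ : ∃ j, 2 * k + n = j + 1 := ⟨2 * k + n - 1, by omega⟩
    rw [hj]
    have hpar : ((-1 : ℝ)) ^ n = (-1) ^ (j + 1) := by
      rw [← hj, neg_one_pow_aux]
    rw [hpar]
    simp only [Nat.add_sub_cancel, dIdx, pow_succ]
    push_cast
    field_simp

lemma coef_id1_zero (μ : ℝ) (hμ : 0 ≤ μ) (p : ℕ) :
    coef μ (p + 1) 0 * dIdx μ (2 * 0 + (p + 1)) = coef μ p 0 := by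
  have e1 : 2 * 0 + (p + 1) = p + 1 := by ring
  have e2 : 0 + (p + 1) = p + 1 := by ring
  have e3 : 2 * 0 + p = p := by ring
  have e4 : 0 + p = p := by ring
  unfold coef
  simp only [e1, e2, e3, e4]
  rw [dFact_succ, Nat.factorial_succ p]
  have hfp : ((Nat.factorial p : ℝ)) ≠ 0 := by exact_mod_cast (Nat.factorial_pos p).ne'
  have hf0 : ((Nat.factorial 0 : ℝ)) ≠ 0 := by norm_num [Nat.factorial]
  have hdf : dFact μ p ≠ 0 := (dFact_pos μ hμ p).ne'
  have hdi : dIdx μ (p + 1) ≠ 0 := (dIdx_pos μ hμ _ (by omega)).ne'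
  push_cast
  field_simp

lemma coef_id1 (μ : ℝ) (hμ : 0 ≤ μ) (p j : ℕ) :
    coef μ (p + 1) (j + 1) * dIdx μ (2 * (j + 1) + (p + 1))
      = coef μ p (j + 1) - coef μ (p + 2) j := by
  have e1 : 2 * (j + 1) + (p + 1) = (2 * j + p + 2) + 1 := by ring
  have e2 : 2 * (j + 1) + p = 2 * j + p + 2 := by ring
  have e3 : 2 * j + (p + 2) = 2 * j + p + 2 := by ring
  have e4 : (j + 1) + (p + 1) = (j + p + 1) + 1 := by ring
  have e5 : (j + 1) + p = j + p + 1 := by ring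
  have e6 : j + (p + 2) = (j + p + 1) + 1 := by ring
  unfold coef
  simp only [e1, e2, e3, e4, e5, e6]
  rw [dFact_succ, Nat.factorial_succ (2 * j + p + 2),
    Nat.factorial_succ (j + p + 1), Nat.factorial_succ j]
  have hfj : ((Nat.factorial j : ℝ)) ≠ 0 := by exact_mod_cast (Nat.factorial_pos j).ne'
  have hfjp : ((Nat.factorial (j + p + 1) : ℝ)) ≠ 0 := by
    exact_mod_cast (Nat.factorial_pos (j + p + 1)).ne'
  have hfm : ((Nat.factorial (2 * j + p + 2) : ℝ)) ≠ 0 := by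
    exact_mod_cast (Nat.factorial_pos (2 * j + p + 2)).ne'
  have hdf : dFact μ (2 * j + p + 2) ≠ 0 := (dFact_pos μ hμ _).ne'
  have hdi : dIdx μ ((2 * j + p + 2) + 1) ≠ 0 := (dIdx_pos μ hμ _ (by omega)).ne'
  push_cast
  field_simp
  ring

lemma coef_id0 (μ : ℝ) (hμ : 0 ≤ μ) (j : ℕ) :
    coef μ 0 (j + 1) * dIdx μ (2 * (j + 1) + 0) = -2 * coef μ 1 j := by
  have e1 : 2 * (j + 1) + 0 = (2 * j + 1) + 1 := by ring
  have e2 : (j + 1) + 0 = j + 1 := by ring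
  have e3 : 2 * j + 1 = 2 * j + 1 := rfl
  have e4 : j + 1 = j + 1 := rfl
  unfold coef
  simp only [e1, e2]
  rw [dFact_succ, Nat.factorial_succ (2 * j + 1), Nat.factorial_succ j]
  have hfj : ((Nat.factorial j : ℝ)) ≠ 0 := by exact_mod_cast (Nat.factorial_pos j).ne'
  have hfm : ((Nat.factorial (2 * j + 1) : ℝ)) ≠ 0 := by
    exact_mod_cast (Nat.factorial_pos (2 * j + 1)).ne'
  have hdf : dFact μ (2 * j + 1) ≠ 0 := (dFact_pos μ hμ _).ne'
  have hdi : dIdx μ ((2 * j + 1) + 1) ≠ 0 := (dIdx_pos μ hμ _ (by omega)).ne'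
  push_cast
  field_simp
  ring

lemma key2_pos (μ : ℝ) (hμ : 0 ≤ μ) (p : ℕ) (x : ℝ) :
    (∑' k : ℕ, coef μ (p + 1) k * (dIdx μ (2 * k + (p + 1)) * (x / 2) ^ (2 * k + (p + 1) - 1)))
      = Jmu μ p x - Jmu μ (p + 2) x := by
  set H : ℕ → ℝ := fun k =>
    if k = 0 then 0 else coef μ (p + 2) (k - 1) * (x / 2) ^ (2 * (k - 1) + (p + 2)) with hH
  have hHs : (fun j : ℕ => H (j + 1)) = fun j : ℕ => coef μ (p + 2) j * (x / 2) ^ (2 * j + (p + 2)) := by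
    funext j; simp [hH]
  have hHsum : Summable H := by
    apply (summable_nat_add_iff 1).mp
    rw [hHs]
    exact summable_Jmu μ hμ (p + 2) x
  have step : ∀ k : ℕ, coef μ (p + 1) k * (dIdx μ (2 * k + (p + 1)) * (x / 2) ^ (2 * k + (p + 1) - 1))
      = coef μ p k * (x / 2) ^ (2 * k + p) - H k := by
    intro k
    cases k with
    | zero =>
      have e : 2 * 0 + (p + 1) - 1 = 2 * 0 + p := by omega
      rw [e, ← mul_assoc, coef_id1_zero μ hμ p]
      simp [hH]
    | succ j =>
      have e : 2 * (j + 1) + (p + 1) - 1 = 2 * (j + 1) + p := by omega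
      rw [e, ← mul_assoc, coef_id1 μ hμ p j, sub_mul]
      have e2 : 2 * j + (p + 2) = 2 * (j + 1) + p := by ring
      simp only [hH, if_neg (Nat.succ_ne_zero j), Nat.add_sub_cancel, e2]
  rw [tsum_congr step, Summable.tsum_sub (summable_Jmu μ hμ p x) hHsum, ← Jmu_eq]
  congr 1
  rw [Summable.tsum_eq_zero_add hHsum, hHs]
  simp only [hH, if_pos rfl, zero_add]
  exact (Jmu_eq μ (p + 2) x).symm

lemma key2_zero (μ : ℝ) (hμ : 0 ≤ μ) (x : ℝ) :
    (∑' k : ℕ, coef μ 0 k * (dIdx μ (2 * k + 0) * (x / 2) ^ (2 * k + 0 - 1)))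
      = -2 * Jmu μ 1 x := by
  set H : ℕ → ℝ := fun k =>
    if k = 0 then 0 else -2 * (coef μ 1 (k - 1) * (x / 2) ^ (2 * (k - 1) + 1)) with hH
  have hHs : (fun j : ℕ => H (j + 1)) = fun j : ℕ => -2 * (coef μ 1 j * (x / 2) ^ (2 * j + 1)) := by
    funext j; simp [hH]
  have hHsum : Summable H := by
    apply (summable_nat_add_iff 1).mp
    rw [hHs]
    exact (summable_Jmu μ hμ 1 x).mul_left _
  have step : ∀ k : ℕ, coef μ 0 k * (dIdx μ (2 * k + 0) * (x / 2) ^ (2 * k + 0 - 1)) = H k := by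
    intro k
    cases k with
    | zero => simp [hH, dIdx]
    | succ j =>
      have e : 2 * (j + 1) + 0 - 1 = 2 * j + 1 := by omega
      rw [e, ← mul_assoc, coef_id0 μ hμ j]
      simp only [hH, if_neg (Nat.succ_ne_zero j), Nat.add_sub_cancel]
      ring
  rw [tsum_congr step, Summable.tsum_eq_zero_add hHsum, hHs]
  simp only [hH, if_pos rfl, zero_add]
  rw [tsum_mul_left, ← Jmu_eq]

/-- The recurrence `2 D_μ J_n^μ(x) = J_{n-1}^μ(x) - J_{n+1}^μ(x)`. -/
theorem Jmu_recurrence (μ : ℝ) (hμ : 0 ≤ μ) (n : ℕ) (x : ℝ) (hx : x ≠ 0) :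
    2 * dunkl μ (Jmu μ n) x = JmuZ μ ((n : ℤ) - 1) x - Jmu μ (n + 1) x := by
  rw [key1 μ hμ n x hx]
  cases n with
  | zero =>
    rw [key2_zero μ hμ x]
    have hz : ((0 : ℕ) : ℤ) - 1 = -1 := by norm_num
    rw [hz]
    have : JmuZ μ (-1) x = -Jmu μ 1 x := by
      rw [JmuZ, if_neg (by norm_num)]
      norm_num
    rw [this]
    ring_nf
  | succ p =>
    rw [key2_pos μ hμ p x]
    have hz : ((p + 1 : ℕ) : ℤ) - 1 = (p : ℤ) := by push_cast; ring
    rw [hz]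
    have : JmuZ μ (p : ℤ) x = Jmu μ p x := by
      rw [JmuZ, if_pos (by positivity)]
      norm_num
    rw [this]
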